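/- arXiv:2512.11640 — 2 statements merged into one kernel-verified Lean document; each statement's English description precedes it below -/
import Mathlib

section
/- Let 1 < p < ∞, z ∈ B_{ℓ_p}, and s > 0 with ‖z‖_p^p + s^p ≤ 1. Then w*-ac{δ_{z[n] + s e_m} : m > n ≥ 1} = w*-ac{δ_{z[m−1] + s e_m} : m ≥ 2}, as subsets of ℳ(𝒜_u(B_{ℓ_p})). -/
open Metric Filter Set Topology ENNReal

noncomputable section

/-- Membership in the algebra `𝒜_u(B_X)` of holomorphic and uniformly continuous
functions on the open unit ball of `X`, each such function being identified with
its (unique) uniformly continuous extension to the closed unit ball. -/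
def MemAu (X : Type*) [NormedAddCommGroup X] [NormedSpace ℂ X] (f : X → ℂ) : Prop :=
  DifferentiableOn ℂ f (ball (0 : X) 1) ∧ UniformContinuousOn f (closedBall (0 : X) 1)

/-- The spectrum `ℳ(𝒜_u(B_X))`: nonzero multiplicative linear functionals on
`𝒜_u(B_X)` (such functionals automatically have norm at most one, which is the
content of the field `bound'`). -/
structure SpectrumAu (X : Type*) [NormedAddCommGroup X] [NormedSpace ℂ X] where
  toFun : ∀ f : X → ℂ, MemAu X f → ℂ
  ext' : ∀ f g hf hg, Set.EqOn f g (closedBall (0 : X) 1) → toFun f hf = toFun g hg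
  map_add' : ∀ f g hf hg hfg, toFun (f + g) hfg = toFun f hf + toFun g hg
  map_smul' : ∀ (c : ℂ) (f : X → ℂ) (hf) (hcf), toFun (c • f) hcf = c * toFun f hf
  map_mul' : ∀ f g hf hg hfg, toFun (f * g) hfg = toFun f hf * toFun g hg
  nonzero' : ∃ f hf, toFun f hf ≠ 0
  bound' : ∀ f hf C, (∀ x ∈ closedBall (0 : X) 1, ‖f x‖ ≤ C) → ‖toFun f hf‖ ≤ C

theorem memAu_one (X : Type*) [NormedAddCommGroup X] [NormedSpace ℂ X] :
    MemAu X (1 : X → ℂ) :=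
  ⟨fun _ _ => differentiableWithinAt_const 1,
    uniformContinuous_const.mono_left inf_le_left⟩

/-- The evaluation homomorphism at a point of the closed unit ball. -/
def evalHomCB {X : Type*} [NormedAddCommGroup X] [NormedSpace ℂ X]
    (x : X) (hx : ‖x‖ ≤ 1) : SpectrumAu X where
  toFun f _ := f x
  ext' := fun _ _ _ _ h => h (mem_closedBall_zero_iff.2 hx)
  map_add' := fun _ _ _ _ _ => rfl
  map_smul' := fun _ _ _ _ => rfl
  map_mul' := fun _ _ _ _ _ => rfl
  nonzero' := ⟨1, memAu_one X, one_ne_zero⟩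
  bound' := fun _ _ _ hC => hC x (mem_closedBall_zero_iff.2 hx)

/-- The evaluation homomorphism `δ_x`; junk value for `x` outside the closed ball. -/
def evalHom {X : Type*} [NormedAddCommGroup X] [NormedSpace ℂ X] (x : X) : SpectrumAu X :=
  if hx : ‖x‖ ≤ 1 then evalHomCB x hx else evalHomCB 0 (by simp)

/-- The Gleason distance `‖φ - ψ‖` in the dual of `𝒜_u(B_X)`. -/
def gleasonDist {X : Type*} [NormedAddCommGroup X] [NormedSpace ℂ X]
    (φ ψ : SpectrumAu X) : ℝ :=
  sSup {r : ℝ | ∃ (f : X → ℂ) (hf : MemAu X f),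
    (∀ x ∈ closedBall (0 : X) 1, ‖f x‖ ≤ 1) ∧ r = ‖φ.toFun f hf - ψ.toFun f hf‖}

/-- The Gleason part `𝒢𝒫(φ)`. -/
def gleasonPart {X : Type*} [NormedAddCommGroup X] [NormedSpace ℂ X]
    (φ : SpectrumAu X) : Set (SpectrumAu X) :=
  {ψ | gleasonDist φ ψ < 2}

/-- The pseudo-hyperbolic distance `ρ(φ, ψ)`. -/
def pseudoDist {X : Type*} [NormedAddCommGroup X] [NormedSpace ℂ X]
    (φ ψ : SpectrumAu X) : ℝ :=
  sSup {r : ℝ | ∃ (f : X → ℂ) (hf : MemAu X f),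
    (∀ x ∈ closedBall (0 : X) 1, ‖f x‖ ≤ 1) ∧ ψ.toFun f hf = 0 ∧ r = ‖φ.toFun f hf‖}

/-- Membership in the fiber `ℳ_z` over a point `z` of `X`. -/
def memFiber {X : Type*} [NormedAddCommGroup X] [NormedSpace ℂ X]
    (φ : SpectrumAu X) (z : X) : Prop :=
  ∀ (x' : X →L[ℂ] ℂ) (h : MemAu X ⇑x'), φ.toFun ⇑x' h = x' z

/-- The set of weak-star accumulation points of a family in the spectrum. -/
def wStarAccPts {X : Type*} [NormedAddCommGroup X] [NormedSpace ℂ X]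
    {ι : Type*} (l : Filter ι) (Φ : ι → SpectrumAu X) : Set (SpectrumAu X) :=
  {ψ | ∀ (F : Finset (X → ℂ)) (hF : ∀ f ∈ F, MemAu X f) (ε : ℝ), 0 < ε →
    ∃ᶠ i in l, ∀ f, ∀ hf : f ∈ F,
      ‖(Φ i).toFun f (hF f hf) - ψ.toFun f (hF f hf)‖ < ε}

/-- Weak-star convergence of a net in the spectrum. -/
def WStarTendsto {X : Type*} [NormedAddCommGroup X] [NormedSpace ℂ X]
    {ι : Type*} (l : Filter ι) (Φ : ι → SpectrumAu X) (ψ : SpectrumAu X) : Prop :=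
  ∀ (f : X → ℂ) (hf : MemAu X f),
    Tendsto (fun i => (Φ i).toFun f hf) l (𝓝 (ψ.toFun f hf))

/-- Membership in the weak-star closure of the set of evaluations at points of the
open unit ball. -/
def inWStarClosureOfEvals {X : Type*} [NormedAddCommGroup X] [NormedSpace ℂ X]
    (ψ : SpectrumAu X) : Prop :=
  ∀ (F : Finset (X → ℂ)) (hF : ∀ f ∈ F, MemAu X f) (ε : ℝ), 0 < ε →
    ∃ x : X, ‖x‖ < 1 ∧ ∀ f, ∀ hf : f ∈ F,
      ‖(evalHom x).toFun f (hF f hf) - ψ.toFun f (hF f hf)‖ < ε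

/-- `φ` is a strong boundary point: for every (basic) weak-star neighborhood `U` of
`φ` there is `f ∈ 𝒜_u(B_X)` with `‖f‖ = 1 = φ(f)` and `|ψ(f)| < 1` for `ψ ∉ U`. -/
def IsStrongBoundaryPoint {X : Type*} [NormedAddCommGroup X] [NormedSpace ℂ X]
    (φ : SpectrumAu X) : Prop :=
  ∀ (F : Finset (X → ℂ)) (hF : ∀ f ∈ F, MemAu X f) (ε : ℝ), 0 < ε →
    ∃ (g : X → ℂ) (hg : MemAu X g),
      (∀ x ∈ closedBall (0 : X) 1, ‖g x‖ ≤ 1) ∧ φ.toFun g hg = 1 ∧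
      ∀ ψ : SpectrumAu X,
        (∃ f, ∃ hf : f ∈ F, ε ≤ ‖ψ.toFun f (hF f hf) - φ.toFun f (hF f hf)‖) →
        ‖ψ.toFun g hg‖ < 1

/-- The radius function `R(φ)`. -/
def radiusFn {X : Type*} [NormedAddCommGroup X] [NormedSpace ℂ X]
    (φ : SpectrumAu X) : ℝ :=
  sInf {r : ℝ | 0 < r ∧ r ≤ 1 ∧ ∀ (f : X → ℂ) (hf : MemAu X f) (C : ℝ),
    (∀ x ∈ ball (0 : X) r, ‖f x‖ ≤ C) → ‖φ.toFun f hf‖ ≤ C}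

/-- A continuous `k`-homogeneous polynomial: `P x = A(x, …, x)` for a continuous
symmetric `k`-linear form `A`. -/
def IsHomogPoly (X : Type*) [NormedAddCommGroup X] [NormedSpace ℂ X]
    (k : ℕ) (P : X → ℂ) : Prop :=
  ∃ A : ContinuousMultilinearMap ℂ (fun _ : Fin k => X) ℂ,
    (∀ (v : Fin k → X) (σ : Equiv.Perm (Fin k)), A (v ∘ σ) = A v) ∧
    ∀ x, P x = A fun _ => x

/-- The supremum norm of a polynomial over the closed unit ball. -/
def polyNorm (X : Type*) [NormedAddCommGroup X] [NormedSpace ℂ X] (P : X → ℂ) : ℝ :=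
  sSup {r : ℝ | ∃ x : X, ‖x‖ ≤ 1 ∧ r = ‖P x‖}

/-- The truncation `z[n] = (z 0, …, z (n-1), 0, 0, …)` of an element of `ℓ_p`. -/
def lpTrunc (p : ℝ≥0∞) (z : lp (fun _ : ℕ => ℂ) p) (n : ℕ) : lp (fun _ : ℕ => ℂ) p :=
  ∑ i ∈ Finset.range n, lp.single p i (z i)

/-- The canonical unit vector `e_n` of `ℓ_p`. -/
def lpUnit (p : ℝ≥0∞) (n : ℕ) : lp (fun _ : ℕ => ℂ) p := lp.single p n 1

/-- The 4-homogeneous polynomial `Q x = Σ_{i<j} (x i * x j)^2` on `ℓ_1`. -/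
def Qpoly (x : lp (fun _ : ℕ => ℂ) 1) : ℂ :=
  ∑' q : {q : ℕ × ℕ // q.1 < q.2}, (x q.1.1 * x q.1.2) ^ 2

/-- The characteristic sequence `1_M` of a set `M ⊆ ℕ`, as an element of `ℓ_∞`. -/
def indicatorSeq (M : Set ℕ) : lp (fun _ : ℕ => ℂ) ⊤ :=
  ⟨M.indicator fun _ => (1 : ℂ), memℓp_infty (by
    refine ⟨1, ?_⟩
    rintro r ⟨i, rfl⟩
    by_cases h : i ∈ M <;> simp [h])⟩

/-- Membership in the fiber `ℳ_{z''}` over `z'' ∈ ℓ_1'' = (ℓ_∞)'`, where the dual of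
`ℓ_1` is identified with `ℓ_∞` via the pairing `(y, x) ↦ Σ_i y i * x i`. -/
def memFiberL1 (φ : SpectrumAu (lp (fun _ : ℕ => ℂ) 1))
    (z'' : lp (fun _ : ℕ => ℂ) ⊤ →L[ℂ] ℂ) : Prop :=
  ∀ (y : lp (fun _ : ℕ => ℂ) ⊤)
    (h : MemAu (lp (fun _ : ℕ => ℂ) 1) fun x => ∑' i, y i * x i),
    φ.toFun (fun x => ∑' i, y i * x i) h = z'' y



/-! ### Auxiliary material for Statement 14 -/

instance : Nonempty {q : ℕ × ℕ // 1 ≤ q.1 ∧ q.1 ≤ q.2} := ⟨⟨(1,1), le_refl 1, le_refl 1⟩⟩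

instance : IsDirected {q : ℕ × ℕ // 1 ≤ q.1 ∧ q.1 ≤ q.2} (· ≤ ·) :=
  ⟨fun x y => ⟨⟨(max x.1.1 y.1.1, max x.1.2 y.1.2),
      le_trans x.2.1 (le_max_left _ _), max_le_max x.2.2 y.2.2⟩,
    ⟨le_max_left _ _, le_max_left _ _⟩, ⟨le_max_right _ _, le_max_right _ _⟩⟩⟩

instance : Nonempty {n : ℕ // 1 ≤ n} := ⟨⟨1, le_refl 1⟩⟩

instance : IsDirected {n : ℕ // 1 ≤ n} (· ≤ ·) :=
  ⟨fun x y => ⟨⟨max x.1 y.1, le_trans x.2 (le_max_left _ _)⟩, le_max_left _ _, le_max_right _ _⟩⟩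

lemma lpTrunc_apply (p : ℝ≥0∞) (z : lp (fun _ : ℕ => ℂ) p) (n i : ℕ) :
    lpTrunc p z n i = if i < n then z i else 0 := by
  simp only [lpTrunc, lp.coeFn_sum, Finset.sum_apply, lp.single_apply, Finset.sum_dite_eq,
    Finset.mem_range, Pi.single_apply, Finset.sum_ite_eq, Finset.sum_ite_eq']

lemma point_apply (p : ℝ≥0∞) (z : lp (fun _ : ℕ => ℂ) p) (s : ℝ) (n m i : ℕ) :
    (lpTrunc p z n + (s : ℂ) • lpUnit p m) i
      = (if i < n then z i else 0) + (if i = m then (s : ℂ) else 0) := by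
  have h : (lpTrunc p z n + (s : ℂ) • lpUnit p m) i
      = lpTrunc p z n i + (s : ℂ) * lpUnit p m i := by
    rw [lp.coeFn_add, Pi.add_apply, lp.coeFn_smul, Pi.smul_apply, smul_eq_mul]
  rw [h, lpTrunc_apply]
  congr 1
  by_cases h' : i = m
  · subst h'; simp [lpUnit, lp.single_apply_self]
  · simp [lpUnit, lp.single_apply_ne p m _ h', h']

lemma auxNormPoint (p : ℝ≥0∞) (hpr0 : 0 < p.toReal) (z : lp (fun _ : ℕ => ℂ) p)
    (s : ℝ) (hspos : 0 < s) (hzs : ‖z‖ ^ p.toReal + s ^ p.toReal ≤ 1)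
    {n m : ℕ} (hnm : n ≤ m) :
    ‖lpTrunc p z n + (s : ℂ) • lpUnit p m‖ ≤ 1 := by
  set w := lpTrunc p z n + (s : ℂ) • lpUnit p m with hw
  have key : ‖w‖ ^ p.toReal ≤ 1 := by
    rw [lp.norm_rpow_eq_tsum hpr0]
    have hzero : ∀ i ∉ insert m (Finset.range n), ‖w i‖ ^ p.toReal = 0 := by
      intro i hi
      simp only [Finset.mem_insert, Finset.mem_range, not_or, not_lt] at hi
      rw [hw, point_apply, if_neg (by omega), if_neg hi.1, add_zero, norm_zero,
        Real.zero_rpow hpr0.ne']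
    rw [tsum_eq_sum hzero, Finset.sum_insert (by simp only [Finset.mem_range]; omega)]
    have h1 : ‖w m‖ ^ p.toReal = s ^ p.toReal := by
      rw [hw, point_apply, if_neg (by omega), if_pos rfl, zero_add, Complex.norm_real,
        Real.norm_eq_abs, abs_of_pos hspos]
    have h2 : ∑ i ∈ Finset.range n, ‖w i‖ ^ p.toReal ≤ ‖z‖ ^ p.toReal := by
      have heq : ∀ i ∈ Finset.range n, ‖w i‖ ^ p.toReal = ‖z i‖ ^ p.toReal := by
        intro i hi
        rw [Finset.mem_range] at hi
        rw [hw, point_apply, if_pos hi, if_neg (by omega), add_zero]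
      rw [Finset.sum_congr rfl heq]
      exact sum_le_hasSum _ (fun i _ => Real.rpow_nonneg (norm_nonneg _) _)
        (lp.hasSum_norm hpr0 z)
    linarith
  by_contra hcon
  push_neg at hcon
  have hgt : (1:ℝ) < ‖w‖ ^ p.toReal :=
    (Real.one_lt_rpow_iff_of_pos (lt_trans one_pos hcon)).mpr (Or.inl ⟨hcon, hpr0⟩)
  linarith

lemma auxCauchy (p : ℝ≥0∞) [Fact (1 ≤ p)] (hptop : p ≠ ⊤) (z : lp (fun _ : ℕ => ℂ) p)
    {δ : ℝ} (hδ : 0 < δ) :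
    ∃ N : ℕ, ∀ a ≥ N, ∀ b ≥ N, ‖lpTrunc p z a - lpTrunc p z b‖ < δ := by
  have hc : CauchySeq (fun n => lpTrunc p z n) :=
    ((lp.hasSum_single hptop z).tendsto_sum_nat).cauchySeq
  rw [Metric.cauchySeq_iff] at hc
  obtain ⟨N, hN⟩ := hc δ hδ
  exact ⟨N, fun a ha b hb => by simpa [dist_eq_norm] using hN a ha b hb⟩

lemma auxDelta {X : Type*} [NormedAddCommGroup X] [NormedSpace ℂ X]
    (F : Finset (X → ℂ)) (hF : ∀ f ∈ F, MemAu X f) {ε : ℝ} (hε : 0 < ε) :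
    ∃ δ > 0, ∀ f ∈ F, ∀ x ∈ closedBall (0 : X) 1, ∀ y ∈ closedBall (0 : X) 1,
      dist x y < δ → dist (f x) (f y) < ε := by
  classical
  revert hF
  induction F using Finset.induction_on with
  | empty => exact fun _ => ⟨1, one_pos, by simp⟩
  | @insert g G hgG ih =>
    intro hF
    obtain ⟨δ₁, hδ₁, h₁⟩ := ih fun f hf => hF f (Finset.mem_insert_of_mem hf)
    obtain ⟨δ₂, hδ₂, h₂⟩ :=
      (Metric.uniformContinuousOn_iff.mp (hF g (Finset.mem_insert_self g G)).2) ε hε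
    refine ⟨min δ₁ δ₂, lt_min hδ₁ hδ₂, ?_⟩
    intro f hf x hx y hy hxy
    rcases Finset.mem_insert.mp hf with rfl | hf'
    · exact h₂ x hx y hy (hxy.trans_le (min_le_right _ _))
    · exact h₁ f hf' x hx y hy (hxy.trans_le (min_le_left _ _))

lemma evalHom_toFun {X : Type*} [NormedAddCommGroup X] [NormedSpace ℂ X]
    {x : X} (hx : ‖x‖ ≤ 1) (f : X → ℂ) (hf : MemAu X f) :
    (evalHom x).toFun f hf = f x := by
  unfold evalHom
  rw [dif_pos hx]
  rfl

/-- For `1 < p < ∞`, `z ∈ B_{ℓ_p}` and `s > 0` with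
`‖z‖^p + s^p ≤ 1`, the weak-star accumulation points of the doubly indexed family
`{δ_{z[n] + s e_m} : m > n ≥ 1}` coincide with those of the family
`{δ_{z[m-1] + s e_m} : m ≥ 2}` (all indices written here in `0`-based form). -/
theorem accPts_pairs_eq_accPts_diagonal
    (p : ℝ≥0∞) [Fact (1 ≤ p)] (hp : 1 < p) (hptop : p ≠ ⊤)
    (z : lp (fun _ : ℕ => ℂ) p) (hz : ‖z‖ < 1)
    (s : ℝ) (hspos : 0 < s) (hzs : ‖z‖ ^ p.toReal + s ^ p.toReal ≤ 1) :
    wStarAccPts (atTop : Filter {q : ℕ × ℕ // 1 ≤ q.1 ∧ q.1 ≤ q.2})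
        (fun q => evalHom (lpTrunc p z q.1.1 + (s : ℂ) • lpUnit p q.1.2)) =
      wStarAccPts (atTop : Filter {n : ℕ // 1 ≤ n})
        (fun n => evalHom (lpTrunc p z n.1 + (s : ℂ) • lpUnit p n.1)) := by
  classical
  have hpr : 1 < p.toReal := by
    have h := (ENNReal.toReal_lt_toReal ENNReal.one_ne_top hptop).mpr hp
    simpa using h
  have hpr0 : 0 < p.toReal := lt_trans one_pos hpr
  have hball : ∀ {n m : ℕ}, n ≤ m →
      ‖lpTrunc p z n + (s : ℂ) • lpUnit p m‖ ≤ 1 :=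
    fun hnm => auxNormPoint p hpr0 z s hspos hzs hnm
  ext ψ
  simp only [wStarAccPts, Set.mem_setOf_eq]
  constructor
  · -- pairs ⊆ diagonal
    intro hψ F hF ε hε
    obtain ⟨δ, hδ, hδF⟩ := auxDelta F hF (half_pos hε)
    obtain ⟨N, hN⟩ := auxCauchy p hptop z hδ
    rw [Filter.frequently_atTop]
    intro a
    set c : ℕ := max a.1 (max N 1) with hc
    have hc1 : 1 ≤ c := le_trans (Nat.le_max_right N 1) (Nat.le_max_right a.1 _)
    obtain ⟨q, hq, hqest⟩ :=
      (Filter.frequently_atTop.mp (hψ F hF (ε/2) (half_pos hε))) ⟨(c, c), hc1, le_rfl⟩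
    have hq' : c ≤ q.1.1 ∧ c ≤ q.1.2 := hq
    have hq21 : 1 ≤ q.1.1 := q.2.1
    have hq22 : q.1.1 ≤ q.1.2 := q.2.2
    have hNc : N ≤ c := le_trans (Nat.le_max_left N 1) (Nat.le_max_right a.1 _)
    refine ⟨⟨q.1.2, le_trans hq21 hq22⟩, ?_, ?_⟩
    · show a.1 ≤ q.1.2
      exact le_trans (Nat.le_max_left a.1 _) hq'.2
    intro f hf
    show ‖(evalHom (lpTrunc p z q.1.2 + (s : ℂ) • lpUnit p q.1.2)).toFun f (hF f hf)
        - ψ.toFun f (hF f hf)‖ < ε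
    have hx1 : ‖lpTrunc p z q.1.2 + (s : ℂ) • lpUnit p q.1.2‖ ≤ 1 := hball le_rfl
    have hx2 : ‖lpTrunc p z q.1.1 + (s : ℂ) • lpUnit p q.1.2‖ ≤ 1 := hball hq22
    rw [evalHom_toFun hx1]
    have h5 := hqest f hf
    rw [evalHom_toFun hx2] at h5
    have hdist : dist (lpTrunc p z q.1.2 + (s : ℂ) • lpUnit p q.1.2)
        (lpTrunc p z q.1.1 + (s : ℂ) • lpUnit p q.1.2) < δ := by
      rw [dist_eq_norm, add_sub_add_right_eq_sub]
      exact hN q.1.2 (le_trans hNc (le_trans hq'.1 hq22)) q.1.1 (le_trans hNc hq'.1)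
    have hfd := hδF f hf _ (mem_closedBall_zero_iff.mpr hx1) _
      (mem_closedBall_zero_iff.mpr hx2) hdist
    calc ‖f (lpTrunc p z q.1.2 + (s : ℂ) • lpUnit p q.1.2) - ψ.toFun f (hF f hf)‖
        = dist (f (lpTrunc p z q.1.2 + (s : ℂ) • lpUnit p q.1.2)) (ψ.toFun f (hF f hf)) :=
          (dist_eq_norm _ _).symm
      _ ≤ dist (f (lpTrunc p z q.1.2 + (s : ℂ) • lpUnit p q.1.2))
            (f (lpTrunc p z q.1.1 + (s : ℂ) • lpUnit p q.1.2))
          + dist (f (lpTrunc p z q.1.1 + (s : ℂ) • lpUnit p q.1.2)) (ψ.toFun f (hF f hf)) :=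
          dist_triangle _ _ _
      _ < ε/2 + ε/2 := add_lt_add hfd (by rw [dist_eq_norm]; exact h5)
      _ = ε := add_halves ε
  · -- diagonal ⊆ pairs
    intro hψ F hF ε hε
    obtain ⟨δ, hδ, hδF⟩ := auxDelta F hF (half_pos hε)
    obtain ⟨N, hN⟩ := auxCauchy p hptop z hδ
    rw [Filter.frequently_atTop]
    intro a
    set c : ℕ := max (max a.1.1 a.1.2) (max N 1) with hc
    have hc1 : 1 ≤ c := le_trans (Nat.le_max_right N 1) (Nat.le_max_right _ _)
    have hNc : N ≤ c := le_trans (Nat.le_max_left N 1) (Nat.le_max_right _ _)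
    obtain ⟨b, hb, hbest⟩ :=
      (Filter.frequently_atTop.mp (hψ F hF (ε/2) (half_pos hε))) ⟨c, hc1⟩
    have hb' : c ≤ b.1 := hb
    refine ⟨⟨(c, b.1), hc1, hb'⟩, ?_, ?_⟩
    · show (a.1.1, a.1.2) ≤ (c, b.1)
      exact ⟨le_trans (Nat.le_max_left a.1.1 a.1.2) (Nat.le_max_left _ _),
        le_trans (le_trans (Nat.le_max_right a.1.1 a.1.2) (Nat.le_max_left _ _)) hb'⟩
    · intro f hf
      show ‖(evalHom (lpTrunc p z c + (s : ℂ) • lpUnit p b.1)).toFun f (hF f hf)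
          - ψ.toFun f (hF f hf)‖ < ε
      have hx1 : ‖lpTrunc p z c + (s : ℂ) • lpUnit p b.1‖ ≤ 1 := hball hb'
      have hx2 : ‖lpTrunc p z b.1 + (s : ℂ) • lpUnit p b.1‖ ≤ 1 := hball le_rfl
      rw [evalHom_toFun hx1]
      have h5 := hbest f hf
      rw [evalHom_toFun hx2] at h5
      have hdist : dist (lpTrunc p z c + (s : ℂ) • lpUnit p b.1)
          (lpTrunc p z b.1 + (s : ℂ) • lpUnit p b.1) < δ := by
        rw [dist_eq_norm, add_sub_add_right_eq_sub]
        exact hN c hNc b.1 (le_trans hNc hb')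
      have hfd := hδF f hf _ (mem_closedBall_zero_iff.mpr hx1) _
        (mem_closedBall_zero_iff.mpr hx2) hdist
      calc ‖f (lpTrunc p z c + (s : ℂ) • lpUnit p b.1) - ψ.toFun f (hF f hf)‖
          = dist (f (lpTrunc p z c + (s : ℂ) • lpUnit p b.1)) (ψ.toFun f (hF f hf)) :=
            (dist_eq_norm _ _).symm
        _ ≤ dist (f (lpTrunc p z c + (s : ℂ) • lpUnit p b.1))
              (f (lpTrunc p z b.1 + (s : ℂ) • lpUnit p b.1))
            + dist (f (lpTrunc p z b.1 + (s : ℂ) • lpUnit p b.1)) (ψ.toFun f (hF f hf)) :=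
            dist_triangle _ _ _
        _ < ε/2 + ε/2 := add_lt_add hfd (by rw [dist_eq_norm]; exact h5)
        _ = ε := add_halves ε


end
end

section
/- For each ω ∈ c₀^⊥ ⊆ (ℓ_∞)' with ‖ω‖ < 1, there exist an infinite subset M ⊆ ℕ and a net {x_β}_β of elements of ℓ_1 with ‖x_β‖₁ ≤ ‖ω‖ and supp(x_β) ⊆ ℕ \ M for every β, such that {x_β}_β converges to ω in the weak-star topology of (ℓ_∞)' (that is, y(x_β) := Σ_i y(i) x_β(i) → ω(y) for every y ∈ ℓ_∞). -/
open Metric Filter Set Topology ENNReal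

noncomputable section

set_option synthInstance.maxHeartbeats 1000000
set_option maxHeartbeats 1000000

abbrev Linf := lp (fun _ : ℕ => ℂ) ⊤
abbrev L1 := lp (fun _ : ℕ => ℂ) 1

/-- mask a bounded sequence by a set -/
def maskSeq (B : Set ℕ) (y : Linf) : Linf :=
  ⟨B.indicator ⇑y, memℓp_infty (by
    refine ⟨‖y‖, ?_⟩
    rintro r ⟨i, rfl⟩
    by_cases h : i ∈ B
    · simpa [Set.indicator_of_mem h] using lp.norm_apply_le_norm ENNReal.top_ne_zero y i
    · simp [Set.indicator_of_notMem h])⟩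

lemma maskSeq_apply (B : Set ℕ) (y : Linf) (i : ℕ) :
    maskSeq B y i = B.indicator (⇑y) i := rfl

lemma maskSeq_add_compl (B : Set ℕ) (y : Linf) :
    maskSeq B y + maskSeq Bᶜ y = y := by
  apply lp.ext
  funext i
  simp only [lp.coeFn_add, Pi.add_apply, maskSeq_apply]
  by_cases h : i ∈ B <;>
    simp [Set.indicator_of_mem, Set.indicator_of_notMem, h]

lemma maskSeq_diff (B C : Set ℕ) (y : Linf) (hCB : C ⊆ B) :
    maskSeq B y = maskSeq C y + maskSeq (B \ C) y := by
  apply lp.ext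
  funext i
  simp only [lp.coeFn_add, Pi.add_apply, maskSeq_apply]
  by_cases hC : i ∈ C
  · simp [Set.indicator_of_mem, Set.indicator_of_notMem, hC, hCB hC,
      (by simp [hC] : i ∉ B \ C)]
  · by_cases hB : i ∈ B <;>
      simp [Set.indicator_of_mem, Set.indicator_of_notMem, hC, hB, Set.mem_diff]

lemma omega_mask_finite_eq_zero (ω : Linf →L[ℂ] ℂ)
    (hperp : ∀ y : Linf, Tendsto (fun i => y i) atTop (𝓝 (0 : ℂ)) → ω y = 0)
    {S : Set ℕ} (hS : S.Finite) (y : Linf) : ω (maskSeq S y) = 0 := by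
  apply hperp
  rcases hS.bddAbove with ⟨m, hm⟩
  have : ∀ i, m < i → maskSeq S y i = 0 := by
    intro i hi
    have : i ∉ S := fun h => absurd (hm h) (not_le.2 hi)
    simp [maskSeq_apply, Set.indicator_of_notMem this]
  refine Tendsto.congr' ?_ tendsto_const_nhds
  filter_upwards [eventually_gt_atTop m] with i hi
  exact (this i hi).symm

/-- almost disjoint family indexed by ℝ -/
def adFam (r : ℝ) : Set ℕ := Set.range (fun n : ℕ => Encodable.encode ((n, ⌊(n : ℝ) * r⌋) : ℕ × ℤ))

lemma adFam_infinite (r : ℝ) : (adFam r).Infinite := by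
  apply Set.infinite_range_of_injective
  intro a b hab
  have := Encodable.encode_injective hab
  exact (Prod.mk.injEq _ _ _ _ ▸ this).1

lemma adFam_ad {r s : ℝ} (hrs : r ≠ s) : (adFam r ∩ adFam s).Finite := by
  have hd : 0 < |r - s| := abs_pos.2 (sub_ne_zero.2 hrs)
  obtain ⟨N, hN⟩ := exists_nat_gt (1 / |r - s|)
  have : adFam r ∩ adFam s ⊆
      (fun n : ℕ => Encodable.encode ((n, ⌊(n : ℝ) * r⌋) : ℕ × ℤ)) '' (Set.Iio N) := by
    rintro m ⟨⟨n, rfl⟩, ⟨n', hn'⟩⟩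
    have hpair := Encodable.encode_injective hn'.symm
    have h1 : n = n' := (Prod.mk.injEq _ _ _ _ ▸ hpair).1
    subst h1
    set n' := n with hn'def
    have h2 : ⌊(n' : ℝ) * r⌋ = ⌊(n' : ℝ) * s⌋ := (Prod.mk.injEq _ _ _ _ ▸ hpair).2
    refine ⟨n', ?_, rfl⟩
    simp only [Set.mem_Iio]
    by_contra hn
    push_neg at hn
    have hfl : |(n' : ℝ) * r - (n' : ℝ) * s| < 1 := by
      have h3 : ((⌊(n' : ℝ) * r⌋ : ℝ)) ≤ (n' : ℝ) * r := Int.floor_le _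
      have h4 : (n' : ℝ) * r < ⌊(n' : ℝ) * r⌋ + 1 := Int.lt_floor_add_one _
      have h5 : ((⌊(n' : ℝ) * s⌋ : ℝ)) ≤ (n' : ℝ) * s := Int.floor_le _
      have h6 : (n' : ℝ) * s < ⌊(n' : ℝ) * s⌋ + 1 := Int.lt_floor_add_one _
      rw [abs_sub_lt_iff]
      constructor <;> · rw [h2] at * ; linarith
    have h7 : (n' : ℝ) * |r - s| < 1 := by
      rwa [← abs_of_nonneg (by positivity : (0:ℝ) ≤ (n':ℝ)), ← abs_mul, mul_sub]
    have h8 : (N : ℝ) ≤ (n' : ℝ) := by exact_mod_cast hn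
    have h9 : 1 < (N : ℝ) * |r - s| := by
      rw [div_lt_iff₀ hd] at hN
      linarith
    nlinarith [mul_le_mul_of_nonneg_right h8 (le_of_lt hd)]
  exact Set.Finite.subset ((Set.finite_Iio N).image _) this

lemma maskSeq_smul (B : Set ℕ) (c : ℂ) (y : Linf) :
    maskSeq B (c • y) = c • maskSeq B y := by
  apply lp.ext
  funext i
  simp only [maskSeq_apply, lp.coeFn_smul, Pi.smul_apply, smul_eq_mul]
  by_cases h : i ∈ B <;> simp [Set.indicator_of_mem, Set.indicator_of_notMem, h]

lemma exists_good_set (ω : Linf →L[ℂ] ℂ)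
    (hperp : ∀ y : Linf, Tendsto (fun i => y i) atTop (𝓝 (0 : ℂ)) → ω y = 0) :
    ∃ M : Set ℕ, M.Infinite ∧ ∀ y : Linf, ω (maskSeq M y) = 0 := by
  by_contra hcon
  push_neg at hcon
  have hy : ∀ r : ℝ, ∃ y : Linf, ‖y‖ ≤ 1 ∧ ω (maskSeq (adFam r) y) ≠ 0 := by
    intro r
    obtain ⟨y₀, hy₀⟩ := hcon (adFam r) (adFam_infinite r)
    refine ⟨(((‖y₀‖ + 1)⁻¹ : ℝ) : ℂ) • y₀, ?_, ?_⟩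
    · rw [norm_smul]
      have h1 : (0:ℝ) < ‖y₀‖ + 1 := by positivity
      have : ‖(((‖y₀‖ + 1)⁻¹ : ℝ) : ℂ)‖ = (‖y₀‖ + 1)⁻¹ := by
        rw [Complex.norm_real, Real.norm_eq_abs, abs_of_nonneg (by positivity)]
      rw [this, inv_mul_le_iff₀ h1]
      linarith [norm_nonneg y₀]
    · rw [maskSeq_smul, map_smul, smul_eq_mul]
      have : (((‖y₀‖ + 1)⁻¹ : ℝ) : ℂ) ≠ 0 := by
        simp only [ne_eq, Complex.ofReal_eq_zero, inv_eq_zero]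
        positivity
      exact mul_ne_zero this hy₀
  choose y hy1 hy2 using hy
  set R : ℕ → Set ℝ := fun k => {r | ((k : ℝ) + 1)⁻¹ ≤ ‖ω (maskSeq (adFam r) (y r))‖} with hR
  have hcover : ∀ r : ℝ, ∃ k, r ∈ R k := by
    intro r
    have hv : 0 < ‖ω (maskSeq (adFam r) (y r))‖ := norm_pos_iff.2 (hy2 r)
    obtain ⟨k, hk⟩ := exists_nat_gt (‖ω (maskSeq (adFam r) (y r))‖⁻¹)
    refine ⟨k, ?_⟩
    simp only [hR, Set.mem_setOf_eq]
    rw [inv_le_comm₀ (by positivity) hv]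
    calc ‖ω (maskSeq (adFam r) (y r))‖⁻¹ ≤ (k : ℝ) := le_of_lt hk
      _ ≤ (k : ℝ) + 1 := by linarith
  have hinf : ∃ k, (R k).Infinite := by
    by_contra h
    push_neg at h
    have : (Set.univ : Set ℝ).Countable := by
      have hsub : (Set.univ : Set ℝ) ⊆ ⋃ k, R k := by
        intro r _
        obtain ⟨k, hk⟩ := hcover r
        exact Set.mem_iUnion.2 ⟨k, hk⟩
      exact (Set.countable_iUnion fun k => (h k).countable).mono hsub
    exact Cardinal.not_countable_real this
  obtain ⟨k, hk⟩ := hinf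
  set N : ℕ := ⌊((k : ℝ) + 1) * ‖ω‖⌋₊ + 1 with hN
  obtain ⟨s, hsub, hcard⟩ := hk.exists_subset_card_eq N
  set B : ℝ → Set ℕ := fun r => adFam r \ ⋃ r' ∈ s.erase r, adFam r' with hB
  have hBsub : ∀ r, B r ⊆ adFam r := fun r => Set.diff_subset
  have hdiff_fin : ∀ r ∈ s, (adFam r \ B r).Finite := by
    intro r _
    have hsubd : adFam r \ B r ⊆ ⋃ r' ∈ s.erase r, (adFam r ∩ adFam r') := by
      intro i hi
      obtain ⟨hi1, hi2⟩ := hi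
      simp only [hB, Set.mem_diff, not_and, not_not] at hi2
      obtain hi3 := hi2 hi1
      simp only [Set.mem_iUnion] at hi3 ⊢
      obtain ⟨r', hr', hir'⟩ := hi3
      exact ⟨r', hr', hi1, hir'⟩
    refine Set.Finite.subset (Set.Finite.biUnion (s.erase r).finite_toSet
      (fun r' hr' => adFam_ad ?_)) hsubd
    exact (Finset.ne_of_mem_erase hr').symm
  set w : ℝ → ℂ := fun r => ω (maskSeq (B r) (y r)) with hw
  have hweq : ∀ r ∈ s, w r = ω (maskSeq (adFam r) (y r)) := by
    intro r hr
    have h1 := maskSeq_diff (adFam r) (B r) (y r) (hBsub r)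
    have h2 : ω (maskSeq (adFam r) (y r)) =
        ω (maskSeq (B r) (y r)) + ω (maskSeq (adFam r \ B r) (y r)) := by
      rw [h1, map_add]
    rw [omega_mask_finite_eq_zero ω hperp (hdiff_fin r hr), add_zero] at h2
    exact h2.symm
  have hwlb : ∀ r ∈ s, ((k : ℝ) + 1)⁻¹ ≤ ‖w r‖ := by
    intro r hr
    rw [hweq r hr]
    exact hsub hr
  have hwne : ∀ r ∈ s, w r ≠ 0 := by
    intro r hr h0
    have hle := hwlb r hr
    rw [h0, norm_zero] at hle
    have hpos : (0:ℝ) < ((k : ℝ) + 1)⁻¹ := by positivity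
    linarith
  set θ : ℝ → ℂ := fun r => (‖w r‖ : ℂ) / w r with hθ
  have hθnorm : ∀ r ∈ s, ‖θ r‖ = 1 := by
    intro r hr
    have hne := hwne r hr
    rw [hθ]
    simp only [norm_div, Complex.norm_real, Real.norm_eq_abs, abs_norm]
    rw [div_self (norm_ne_zero_iff.2 hne)]
  have hθw : ∀ r ∈ s, θ r * w r = (‖w r‖ : ℂ) := by
    intro r hr
    rw [hθ]
    exact div_mul_cancel₀ _ (hwne r hr)
  have hdisj : ∀ r₁ ∈ s, ∀ r₂ ∈ s, r₁ ≠ r₂ → ∀ i ∈ B r₁, i ∉ B r₂ := by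
    intro r₁ hr₁ r₂ _ hne i hi₁ hi₂
    have h1 : i ∈ adFam r₁ := hBsub r₁ hi₁
    have h2 : i ∉ ⋃ r' ∈ s.erase r₂, adFam r' := hi₂.2
    apply h2
    simp only [Set.mem_iUnion]
    exact ⟨r₁, Finset.mem_erase.2 ⟨hne, hr₁⟩, h1⟩
  set z : Linf := ∑ r ∈ s, θ r • maskSeq (B r) (y r) with hz
  have hzapply : ∀ i, z i = ∑ r ∈ s, θ r * ((B r).indicator (⇑(y r)) i) := by
    intro i
    rw [hz]
    rw [lp.coeFn_sum]
    rw [Finset.sum_apply]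
    apply Finset.sum_congr rfl
    intro r _
    rw [lp.coeFn_smul, Pi.smul_apply, smul_eq_mul, maskSeq_apply]
  have hznorm : ‖z‖ ≤ 1 := by
    apply lp.norm_le_of_forall_le zero_le_one
    intro i
    rw [hzapply i]
    by_cases hex : ∃ r ∈ s, i ∈ B r
    · obtain ⟨r₀, hr₀, hir₀⟩ := hex
      rw [Finset.sum_eq_single_of_mem r₀ hr₀ (fun r hr hne => by
        rw [Set.indicator_of_notMem (by
          intro hiB
          exact hdisj r hr r₀ hr₀ hne i hiB hir₀), mul_zero])]
      rw [Set.indicator_of_mem hir₀, norm_mul, hθnorm r₀ hr₀, one_mul]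
      exact le_trans (lp.norm_apply_le_norm ENNReal.top_ne_zero (y r₀) i) (hy1 r₀)
    · push_neg at hex
      rw [Finset.sum_eq_zero (fun r hr => by
        rw [Set.indicator_of_notMem (hex r hr), mul_zero])]
      simp
  have hωz : ω z = ((∑ r ∈ s, ‖w r‖ : ℝ) : ℂ) := by
    rw [hz, map_sum]
    push_cast
    apply Finset.sum_congr rfl
    intro r hr
    rw [map_smul, smul_eq_mul, hθw r hr]
  have hsum_lb : (N : ℝ) * ((k : ℝ) + 1)⁻¹ ≤ ∑ r ∈ s, ‖w r‖ := by
    have := Finset.card_nsmul_le_sum s (fun r => ‖w r‖) (((k : ℝ) + 1)⁻¹) hwlb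
    rwa [hcard, nsmul_eq_mul] at this
  have hub : ‖ω z‖ ≤ ‖ω‖ := by
    calc ‖ω z‖ ≤ ‖ω‖ * ‖z‖ := ω.le_opNorm z
      _ ≤ ‖ω‖ := mul_le_of_le_one_right (norm_nonneg ω) hznorm
  have hsum_nonneg : (0:ℝ) ≤ ∑ r ∈ s, ‖w r‖ :=
    Finset.sum_nonneg fun r _ => norm_nonneg _
  have heq : ‖ω z‖ = ∑ r ∈ s, ‖w r‖ := by
    rw [hωz, Complex.norm_real, Real.norm_eq_abs, abs_of_nonneg hsum_nonneg]
  have hN_gt : ‖ω‖ < (N : ℝ) * ((k : ℝ) + 1)⁻¹ := by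
    have h1 : ((k : ℝ) + 1) * ‖ω‖ < (N : ℝ) := by
      have := Nat.lt_floor_add_one (((k : ℝ) + 1) * ‖ω‖)
      rw [hN]
      push_cast
      linarith
    have h2 : (0:ℝ) < (k : ℝ) + 1 := by positivity
    calc ‖ω‖ = (((k : ℝ) + 1) * ‖ω‖) * ((k : ℝ) + 1)⁻¹ := by
            field_simp
        _ < (N : ℝ) * ((k : ℝ) + 1)⁻¹ := by
            apply mul_lt_mul_of_pos_right h1 (by positivity)
  linarith [heq ▸ hub]

lemma summable_mul_lp (y : Linf) (x : L1) : Summable fun i => y i * x i := by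
  have hx : Summable fun i => ‖x i‖ := by
    have h := (lp.memℓp x).summable (by norm_num : 0 < (1 : ℝ≥0∞).toReal)
    simpa using h
  apply Summable.of_norm_bounded (g := fun i => ‖y‖ * ‖x i‖) (hx.mul_left ‖y‖)
  intro i
  rw [norm_mul]
  exact mul_le_mul_of_nonneg_right (lp.norm_apply_le_norm ENNReal.top_ne_zero y i)
    (norm_nonneg _)

lemma dense_step (ω : Linf →L[ℂ] ℂ) (M : Set ℕ) (hM : ∀ y : Linf, ω (maskSeq M y) = 0)
    (F : Finset Linf) {ε : ℝ} (hε : 0 < ε) :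
    ∃ x : L1, ‖x‖ ≤ ‖ω‖ ∧ (∀ i ∈ M, x i = 0) ∧
      ∀ y ∈ F, ‖(∑' i, y i * x i) - ω y‖ < ε := by
  classical
  set A : Set L1 := {x | ‖x‖ ≤ ‖ω‖ ∧ ∀ i ∈ M, x i = 0} with hA
  set T : L1 → (↥F → ℂ) := fun x => fun y => ∑' i, (y : Linf) i * x i with hT
  set S : Set (↥F → ℂ) := T '' A with hS
  set t : ↥F → ℂ := fun y => ω ↑y with ht
  have h0A : (0 : L1) ∈ A := by
    constructor
    · simp [norm_nonneg]
    · intro i _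
      simp
  have hT0 : T 0 = 0 := by
    funext y
    simp only [hT]
    have : ∀ i : ℕ, (y : Linf) i * ((0 : L1) : ∀ _ : ℕ, ℂ) i = 0 := by
      intro i
      rw [lp.coeFn_zero]
      simp
    rw [tsum_congr this, tsum_zero]
    rfl
  have hSconv : Convex ℝ S := by
    rintro v₁ ⟨x₁, ⟨hx₁n, hx₁s⟩, rfl⟩ v₂ ⟨x₂, ⟨hx₂n, hx₂s⟩, rfl⟩ a b ha hb hab
    refine ⟨a • x₁ + b • x₂, ⟨?_, ?_⟩, ?_⟩
    · calc ‖a • x₁ + b • x₂‖ ≤ ‖a • x₁‖ + ‖b • x₂‖ := norm_add_le _ _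
        _ = a * ‖x₁‖ + b * ‖x₂‖ := by
            rw [norm_smul, norm_smul, Real.norm_eq_abs, Real.norm_eq_abs,
              abs_of_nonneg ha, abs_of_nonneg hb]
        _ ≤ a * ‖ω‖ + b * ‖ω‖ := by
            apply add_le_add
            · exact mul_le_mul_of_nonneg_left hx₁n ha
            · exact mul_le_mul_of_nonneg_left hx₂n hb
        _ = ‖ω‖ := by rw [← add_mul, hab, one_mul]
    · intro i hi
      rw [lp.coeFn_add, Pi.add_apply, lp.coeFn_smul, lp.coeFn_smul, Pi.smul_apply,
        Pi.smul_apply, hx₁s i hi, hx₂s i hi, smul_zero, smul_zero, add_zero]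
    · funext y
      simp only [hT, Pi.add_apply, Pi.smul_apply, smul_eq_mul]
      have hterm : ∀ i : ℕ, (y : Linf) i * (a • x₁ + b • x₂ : L1) i =
          a • ((y : Linf) i * x₁ i) + b • ((y : Linf) i * x₂ i) := by
        intro i
        rw [lp.coeFn_add, Pi.add_apply, lp.coeFn_smul, lp.coeFn_smul, Pi.smul_apply,
          Pi.smul_apply]
        rw [mul_add, mul_smul_comm, mul_smul_comm]
      rw [tsum_congr hterm,
        Summable.tsum_add ((summable_mul_lp y x₁).const_smul a) ((summable_mul_lp y x₂).const_smul b),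
        tsum_const_smul'' a, tsum_const_smul'' b]
  have hmem : t ∈ closure S := by
    by_contra hnc
    obtain ⟨f, u, hfu, hut⟩ :=
      geometric_hahn_banach_closed_point (hSconv.closure) isClosed_closure hnc
    have hfu' : ∀ x ∈ A, f (T x) < u := fun x hx => hfu _ (subset_closure ⟨x, hx, rfl⟩)
    have hupos : 0 < u := by
      have := hfu' 0 h0A
      rwa [hT0, map_zero] at this
    -- extract the complex coefficients of f
    set c : ↥F → ℂ := fun y =>
      ((f (Pi.single y (1:ℂ) : ↥F → ℂ) : ℝ) : ℂ) -
        Complex.I * ((f (Complex.I • (Pi.single y (1:ℂ) : ↥F → ℂ)) : ℝ) : ℂ) with hc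
    have hre : ∀ (q : ℂ) (v : ↥F → ℂ), f (q • v) = q.re * f v + q.im * f (Complex.I • v) := by
      intro q v
      have hdecomp : q • v = q.re • v + q.im • (Complex.I • v) := by
        have h1 : (q.re : ℂ) • v = q.re • v := by
          rw [← Complex.coe_smul]
        have h2 : ((q.im : ℂ) * Complex.I) • v = q.im • (Complex.I • v) := by
          rw [mul_smul, ← Complex.coe_smul]
        rw [← h1, ← h2, ← add_smul]
        congr 1
        exact (Complex.re_add_im q).symm
      rw [hdecomp, map_add, map_smul, map_smul, smul_eq_mul, smul_eq_mul]
    have hfv : ∀ v : ↥F → ℂ, f v = (∑ y : ↥F, c y * v y).re := by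
      intro v
      conv_lhs => rw [← Finset.univ_sum_single v]
      rw [map_sum, Complex.re_sum]
      apply Finset.sum_congr rfl
      intro y _
      have h1 : (Pi.single y (v y) : ↥F → ℂ) = v y • (Pi.single y (1 : ℂ) : ↥F → ℂ) := by
        rw [← Pi.single_smul, smul_eq_mul, mul_one]
      rw [h1, hre]
      simp only [hc, Complex.mul_re, Complex.sub_re, Complex.ofReal_re, Complex.mul_im,
        Complex.sub_im, Complex.ofReal_im, Complex.I_re, Complex.I_im]
      ring
    set ystar : Linf := ∑ y : ↥F, c y • (y : Linf) with hystar
    have hystar_apply : ∀ i : ℕ, ystar i = ∑ y : ↥F, c y * (y : Linf) i := by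
      intro i
      rw [hystar, lp.coeFn_sum, Finset.sum_apply]
      apply Finset.sum_congr rfl
      intro y _
      rw [lp.coeFn_smul, Pi.smul_apply, smul_eq_mul]
    have hft : f t = (ω ystar).re := by
      rw [hfv t, hystar, map_sum]
      congr 1
      apply Finset.sum_congr rfl
      intro y _
      rw [map_smul, smul_eq_mul]
    have hfT : ∀ x : L1, f (T x) = (∑' i, ystar i * x i).re := by
      intro x
      rw [hfv (T x)]
      congr 1
      have h1 : ∀ y : {z // z ∈ F}, c y * T x y = ∑' i, c y * ((y : Linf) i * x i) := by
        intro y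
        rw [tsum_mul_left]
      rw [Finset.sum_congr rfl fun y _ => h1 y]
      rw [← Summable.tsum_finsetSum (fun (y : {z // z ∈ F}) (_ : y ∈ Finset.univ) => (summable_mul_lp (y : Linf) x).mul_left (c y))]
      apply tsum_congr
      intro i
      rw [hystar_apply i, Finset.sum_mul]
      apply Finset.sum_congr rfl
      intro y _
      ring
    -- the bound
    set K : ℝ := ‖maskSeq Mᶜ ystar‖ with hK
    have hωystar : ω ystar = ω (maskSeq Mᶜ ystar) := by
      conv_lhs => rw [← maskSeq_add_compl M ystar]
      rw [map_add, hM ystar, zero_add]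
    have hbound : (ω ystar).re ≤ ‖ω‖ * K := by
      calc (ω ystar).re ≤ ‖ω ystar‖ := Complex.re_le_norm _
        _ = ‖ω (maskSeq Mᶜ ystar)‖ := by rw [hωystar]
        _ ≤ ‖ω‖ * K := ω.le_opNorm _
    have huK : u < ‖ω‖ * K := lt_of_lt_of_le (hft ▸ hut) hbound
    have hωpos : 0 < ‖ω‖ := by
      rcases le_or_gt ‖ω‖ 0 with h | h
      · exfalso
        have hK0 : 0 ≤ K := norm_nonneg _
        nlinarith
      · exact h
    have hKpos : 0 < K := by nlinarith
    set δ : ℝ := min (K / 2) ((‖ω‖ * K - u) / (2 * ‖ω‖)) with hδ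
    have hδpos : 0 < δ := by
      apply lt_min
      · linarith
      · apply div_pos
        · linarith
        · linarith
    have hKsup : K = ⨆ i, ‖maskSeq Mᶜ ystar i‖ := lp.norm_eq_ciSup _
    obtain ⟨i₀, hi₀⟩ : ∃ i₀ : ℕ, K - δ < ‖maskSeq Mᶜ ystar i₀‖ := by
      apply exists_lt_of_lt_ciSup
      rw [← hKsup]
      linarith
    have hδK : δ ≤ K / 2 := min_le_left _ _
    have hvalpos : 0 < ‖maskSeq Mᶜ ystar i₀‖ := by linarith
    have hi₀M : i₀ ∉ M := by
      intro h
      have : maskSeq Mᶜ ystar i₀ = 0 := by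
        rw [maskSeq_apply, Set.indicator_of_notMem (by simpa using h)]
      rw [this, norm_zero] at hvalpos
      exact lt_irrefl 0 hvalpos
    have hval : maskSeq Mᶜ ystar i₀ = ystar i₀ := by
      rw [maskSeq_apply, Set.indicator_of_mem (by simpa using hi₀M)]
    rw [hval] at hi₀ hvalpos
    have hyne : ystar i₀ ≠ 0 := norm_pos_iff.1 hvalpos
    set a : ℂ := ((‖ω‖ / ‖ystar i₀‖ : ℝ) : ℂ) * (starRingEnd ℂ) (ystar i₀) with ha
    set x : L1 := lp.single 1 i₀ a with hx
    have hxnorm : ‖x‖ = ‖ω‖ := by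
      rw [hx]
      have := lp.norm_single (E := fun _ : ℕ => ℂ) (by norm_num : (0 : ℝ≥0∞) < 1)
        i₀ a
      rw [this, ha, norm_mul, Complex.norm_real, Real.norm_eq_abs,
        abs_of_nonneg (by positivity), RCLike.norm_conj]
      rw [div_mul_eq_mul_div, mul_div_assoc,
        div_self (norm_ne_zero_iff.2 hyne), mul_one]
    have hxA : x ∈ A := by
      refine ⟨le_of_eq hxnorm, ?_⟩
      intro i hi
      rw [hx]
      exact lp.single_apply_ne (E := fun _ : ℕ => ℂ) 1 i₀ a (fun h => hi₀M (h ▸ hi))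
    have hfTx : f (T x) = ‖ω‖ * ‖ystar i₀‖ := by
      rw [hfT x]
      have htsum : (∑' i, ystar i * x i) = ystar i₀ * a := by
        rw [hx]
        rw [tsum_eq_single i₀ (fun j hj => by
          rw [lp.single_apply_ne (E := fun _ : ℕ => ℂ) 1 i₀ a hj, mul_zero])]
        rw [lp.single_apply_self (E := fun _ : ℕ => ℂ)]
      rw [htsum, ha]
      rw [show ystar i₀ * (((‖ω‖ / ‖ystar i₀‖ : ℝ) : ℂ) * (starRingEnd ℂ) (ystar i₀)) =
        ((‖ω‖ / ‖ystar i₀‖ : ℝ) : ℂ) * (ystar i₀ * (starRingEnd ℂ) (ystar i₀)) by ring]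
      rw [Complex.mul_conj]
      rw [← Complex.ofReal_mul, Complex.ofReal_re]
      rw [Complex.normSq_eq_norm_sq]
      have habs : ‖ystar i₀‖ ≠ 0 := norm_ne_zero_iff.2 hyne
      field_simp [habs]
    have hcontra : f (T x) < u := hfu' x hxA
    rw [hfTx] at hcontra
    have hge : ‖ω‖ * (K - δ) ≤ ‖ω‖ * ‖ystar i₀‖ :=
      mul_le_mul_of_nonneg_left (le_of_lt hi₀) (le_of_lt hωpos)
    have hδ2 : δ ≤ (‖ω‖ * K - u) / (2 * ‖ω‖) := min_le_right _ _
    have : u < ‖ω‖ * (K - δ) := by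
      have h1 : ‖ω‖ * δ ≤ (‖ω‖ * K - u) / 2 := by
        rw [le_div_iff₀ (by positivity : (0:ℝ) < 2 * ‖ω‖)] at hδ2
        nlinarith
      nlinarith
    linarith
  -- now use the closure membership
  rw [Metric.mem_closure_iff] at hmem
  obtain ⟨v, hvS, hdist⟩ := hmem ε hε
  obtain ⟨x, ⟨hxn, hxs⟩, rfl⟩ := hvS
  refine ⟨x, hxn, hxs, ?_⟩
  intro y hy
  have h1 : dist (t ⟨y, hy⟩) (T x ⟨y, hy⟩) ≤ dist t (T x) := dist_le_pi_dist t (T x) ⟨y, hy⟩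
  rw [dist_eq_norm] at h1
  calc ‖(∑' i, y i * x i) - ω y‖ = ‖t ⟨y, hy⟩ - T x ⟨y, hy⟩‖ := by
        rw [norm_sub_rev]
    _ ≤ dist t (T x) := h1
    _ < ε := hdist


/-- For each `ω ∈ c₀^⊥ ⊆ (ℓ_∞)'` with `‖ω‖ < 1` there are an
infinite set `M ⊆ ℕ` and a net `{x_β} ⊆ ‖ω‖ B_{ℓ_1}` supported in `ℕ \ M` which
converges to `ω` in the weak-star topology of `(ℓ_∞)'`. -/
theorem exists_net_supported_off_infinite_set
    (ω : lp (fun _ : ℕ => ℂ) ⊤ →L[ℂ] ℂ) (hω : ‖ω‖ < 1)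
    (hperp : ∀ y : lp (fun _ : ℕ => ℂ) ⊤, Tendsto (fun i => y i) atTop (𝓝 (0 : ℂ)) → ω y = 0) :
    ∃ M : Set ℕ, M.Infinite ∧
      ∃ (ι : Type) (l : Filter ι), l.NeBot ∧
        ∃ x : ι → lp (fun _ : ℕ => ℂ) 1,
          (∀ β, ‖x β‖ ≤ ‖ω‖) ∧ (∀ β, ∀ i ∈ M, x β i = 0) ∧
          ∀ y : lp (fun _ : ℕ => ℂ) ⊤,
            Tendsto (fun β => ∑' i : ℕ, y i * x β i) l (𝓝 (ω y)) := by
  classical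
  obtain ⟨M, hMinf, hM⟩ := exists_good_set ω hperp
  have key : ∀ β : Finset Linf × ℕ, ∃ x : L1, ‖x‖ ≤ ‖ω‖ ∧ (∀ i ∈ M, x i = 0) ∧
      ∀ y ∈ β.1, ‖(∑' i, y i * x i) - ω y‖ < 1 / (β.2 + 1) :=
    fun β => dense_step ω M hM β.1 (by positivity)
  choose x hx1 hx2 hx3 using key
  refine ⟨M, hMinf, Finset Linf × ℕ, atTop, atTop_neBot, x, hx1, hx2, ?_⟩
  intro y
  rw [Metric.tendsto_nhds]
  intro ε hε
  obtain ⟨N₀, hN₀⟩ := exists_nat_one_div_lt hε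
  filter_upwards [eventually_ge_atTop (({y} : Finset Linf), N₀)] with β hβ
  have hy : y ∈ β.1 := hβ.1 (Finset.mem_singleton_self y)
  have hle : (1 : ℝ) / (β.2 + 1) ≤ 1 / (N₀ + 1) := by
    apply one_div_le_one_div_of_le
    · positivity
    · have : (N₀ : ℝ) ≤ (β.2 : ℝ) := by exact_mod_cast hβ.2
      linarith
  rw [dist_eq_norm]
  calc ‖(∑' i : ℕ, y i * x β i) - ω y‖ < 1 / (β.2 + 1) := hx3 β y hy
    _ ≤ 1 / (N₀ + 1) := hle
    _ < ε := hN₀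

end
end
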